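/- Let m ≥ 5 and let ω be a primitive m-th root of unity in an algebraically closed field K (char K = 0 or char K = p ≥ 7 with m ≤ p-1). The stabilizer of the projective point P_ω = (ω : ω² : ... : ω^m) in Sym_m acting by coordinate permutation is the cyclic group of order m generated by the m-cycle shifting coordinates; hence the Sym_m-orbit of P_ω has length (m-1)!. -/

import Mathlib

theorem stmt17 {K : Type*} [Field K] [IsAlgClosed K] (p m : ℕ) (hm : 5 ≤ m)
    (hchar : CharP K 0 ∨ (p.Prime ∧ 7 ≤ p ∧ CharP K p ∧ m ≤ p - 1))
    (ω : K) (hω : IsPrimitiveRoot ω m) :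
    (∀ σ : Equiv.Perm (Fin m),
      (∃ c : K, c ≠ 0 ∧ ∀ i : Fin m, ω ^ ((σ i : ℕ) + 1) = c * ω ^ ((i : ℕ) + 1)) ↔
        ∃ j : ℕ, σ = (finRotate m) ^ j) ∧
    Nat.card {w : Fin m → K // w ⟨m - 1, by omega⟩ = 1 ∧
        ∃ σ : Equiv.Perm (Fin m), ∃ c : K, c ≠ 0 ∧
          ∀ i : Fin m, w i = c * ω ^ ((σ i : ℕ) + 1)} =
      Nat.factorial (m - 1) := by
  clear hchar
  obtain ⟨n, rfl⟩ : ∃ n, m = n + 1 := ⟨m - 1, by omega⟩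
  have hn : 4 ≤ n := by omega
  have hne : ω ≠ 0 := hω.ne_zero (by omega)
  have hper : ∀ a : ℕ, ω ^ a = ω ^ (a % (n+1)) := by
    intro a
    conv_lhs => rw [← Nat.div_add_mod a (n+1)]
    rw [pow_add, pow_mul, hω.pow_eq_one, one_pow, one_mul]
  have hmod : ∀ a b : ℕ, ω ^ a = ω ^ b ↔ a ≡ b [MOD (n+1)] := by
    intro a b
    constructor
    · intro h
      rw [hper a, hper b] at h
      exact hω.pow_inj (Nat.mod_lt _ (by omega)) (Nat.mod_lt _ (by omega)) h
    · intro h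
      rw [hper a, hper b, show a % (n+1) = b % (n+1) from h]
  have hlt : ∀ a b : ℕ, a < n+1 → b < n+1 → a ≡ b [MOD (n+1)] → a = b := by
    intro a b ha hb h
    have h' : a % (n+1) = b % (n+1) := h
    rwa [Nat.mod_eq_of_lt ha, Nat.mod_eq_of_lt hb] at h'
  open Fin.NatCast in
  have hrot : ∀ (j : ℕ) (i : Fin (n+1)), ((finRotate (n+1)) ^ j) i = i + (j : Fin (n+1)) := by
    intro j
    induction j with
    | zero => intro i; simp
    | succ j ih =>
        intro i
        rw [pow_succ', Equiv.Perm.mul_apply, finRotate_succ_apply, ih, Nat.cast_add,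
          Nat.cast_one]
        abel
  open Fin.NatCast in
  have hval : ∀ (j : ℕ) (i : Fin (n+1)),
      ((i + (j : Fin (n+1)) : Fin (n+1)) : ℕ) ≡ (i : ℕ) + j [MOD (n+1)] := by
    intro j i
    rw [Fin.add_def, Fin.val_natCast]
    calc ((i : ℕ) + j % (n+1)) % (n+1) ≡ (i : ℕ) + j % (n+1) [MOD (n+1)] :=
          Nat.mod_modEq _ _
      _ ≡ (i : ℕ) + j [MOD (n+1)] := (Nat.mod_modEq j (n+1)).add_left _
  have hsub : ∀ a b : Fin (n+1), ((a - b : Fin (n+1)) : ℕ) + (b : ℕ) ≡ (a : ℕ) [MOD (n+1)] := by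
    intro a b
    have hb := b.isLt
    rw [Fin.sub_def]
    show (((n+1) - (b:ℕ) + (a:ℕ)) % (n+1) + (b:ℕ)) % (n+1) = (a:ℕ) % (n+1)
    rw [Nat.mod_add_mod]
    have h : (n+1) - (b:ℕ) + (a:ℕ) + (b:ℕ) = (a:ℕ) + (n+1) := by omega
    rw [h, Nat.add_mod_right]
  constructor
  · intro σ
    constructor
    · rintro ⟨c, hc0, hc⟩
      refine ⟨(σ 0 : ℕ), Equiv.ext fun i => ?_⟩
      have h0 := hc 0
      rw [Fin.val_zero, zero_add, pow_one, pow_succ] at h0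
      have hcω : c = ω ^ ((σ 0 : ℕ)) := (mul_right_cancel₀ hne h0).symm
      have hi := hc i
      rw [hcω, ← pow_add] at hi
      have h1 : ((σ i : ℕ) + 1) ≡ ((σ 0 : ℕ) + ((i : ℕ) + 1)) [MOD (n+1)] := (hmod _ _).mp hi
      have h2 : ((σ 0 : ℕ) + ((i : ℕ) + 1)) = ((i : ℕ) + (σ 0 : ℕ)) + 1 := by omega
      rw [h2] at h1
      have h3 : (σ i : ℕ) ≡ (i : ℕ) + (σ 0 : ℕ) [MOD (n+1)] := Nat.ModEq.add_right_cancel' 1 h1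
      rw [hrot]
      open Fin.NatCast in
      exact Fin.ext (hlt _ _ (σ i).isLt (i + (((σ 0 : ℕ)) : Fin (n+1))).isLt
        (h3.trans (hval _ i).symm))
    · rintro ⟨j, rfl⟩
      refine ⟨ω ^ j, pow_ne_zero _ hne, fun i => ?_⟩
      rw [hrot, ← pow_add]
      refine (hmod _ _).mpr ?_
      have h2 : j + ((i : ℕ) + 1) = (i : ℕ) + j + 1 := by omega
      rw [h2]
      exact (hval j i).add_right 1
  · have L : Fin (n+1) := ⟨n, by omega⟩
    -- main cardinality computation with L := ⟨n, _⟩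
    have key : ∀ (L : Fin (n+1)), (L : ℕ) = n → Nat.card {w : Fin (n+1) → K // w L = 1 ∧
        ∃ σ : Equiv.Perm (Fin (n+1)), ∃ c : K, c ≠ 0 ∧
          ∀ i : Fin (n+1), w i = c * ω ^ ((σ i : ℕ) + 1)} = Nat.factorial n := by
      intro L _
      have step1 : Nat.card {e : Equiv.Perm (Fin (n+1)) // e L = 0} =
          Nat.card {w : Fin (n+1) → K // w L = 1 ∧
            ∃ σ : Equiv.Perm (Fin (n+1)), ∃ c : K, c ≠ 0 ∧
              ∀ i : Fin (n+1), w i = c * ω ^ ((σ i : ℕ) + 1)} := by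
        refine Nat.card_eq_of_bijective
          (fun e => ⟨fun i => ω ^ ((e.1 i : ℕ)), ?_, ?_⟩) ⟨?_, ?_⟩
        · show ω ^ ((e.1 L : ℕ)) = 1
          rw [e.2, Fin.val_zero, pow_zero]
        · refine ⟨e.1.trans (Equiv.subRight (1 : Fin (n+1))), 1, one_ne_zero, fun i => ?_⟩
          rw [one_mul]
          refine ((hmod _ _).mpr ?_).symm
          have h1 : ((1 : Fin (n+1)) : ℕ) = 1 := by
            rw [Fin.val_one']
            exact Nat.mod_eq_of_lt (by omega)
          have h2 := hsub (e.1 i) 1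
          rw [h1] at h2
          simpa [Equiv.subRight] using h2
        · rintro ⟨e, he⟩ ⟨e', he'⟩ h
          have h2 : (fun i => ω ^ ((e i : ℕ))) = (fun i => ω ^ ((e' i : ℕ))) :=
            congrArg Subtype.val h
          refine Subtype.ext (Equiv.ext fun i => ?_)
          exact Fin.ext (hω.pow_inj (e i).isLt (e' i).isLt (congrFun h2 i))
        · rintro ⟨w, hw1, σ, c, hc0, hc⟩
          refine ⟨⟨σ.trans (Equiv.subRight (σ L)), by simp [Equiv.subRight]⟩, ?_⟩
          refine Subtype.ext ?_
          funext i
          show ω ^ (((σ i - σ L : Fin (n+1)) : ℕ)) = w i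
          have hcL : c * ω ^ ((σ L : ℕ) + 1) = 1 := by rw [← hc L, hw1]
          have hpne : (ω ^ ((σ L : ℕ) + 1)) ≠ 0 := pow_ne_zero _ hne
          refine mul_right_cancel₀ hpne ?_
          have lhs : w i * ω ^ ((σ L : ℕ) + 1) = ω ^ ((σ i : ℕ) + 1) := by
            rw [hc i]
            calc c * ω ^ ((σ i : ℕ) + 1) * ω ^ ((σ L : ℕ) + 1)
                = c * ω ^ ((σ L : ℕ) + 1) * ω ^ ((σ i : ℕ) + 1) := by ring
              _ = ω ^ ((σ i : ℕ) + 1) := by rw [hcL, one_mul]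
          have rhs : ω ^ (((σ i - σ L : Fin (n+1)) : ℕ)) * ω ^ ((σ L : ℕ) + 1) =
              ω ^ ((σ i : ℕ) + 1) := by
            rw [← pow_add]
            refine (hmod _ _).mpr ?_
            have h2 : ((σ i - σ L : Fin (n+1)) : ℕ) + ((σ L : ℕ) + 1) =
                (((σ i - σ L : Fin (n+1)) : ℕ) + (σ L : ℕ)) + 1 := by omega
            rw [h2]
            exact (hsub (σ i) (σ L)).add_right 1
          rw [rhs, lhs]
      have e1 : {e : Equiv.Perm (Fin (n+1)) // e L = 0} ≃ Equiv.Perm (Fin n) := by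
        refine ⟨fun e => (Equiv.Perm.decomposeFin e.1⁻¹).2,
          fun g => ⟨(Equiv.Perm.decomposeFin.symm (L, g))⁻¹, ?_⟩, ?_, ?_⟩
        · refine Equiv.Perm.inv_eq_iff_eq.mpr ?_
          exact (Equiv.Perm.decomposeFin_symm_apply_zero L g).symm
        · rintro ⟨e, he⟩
          have h1 : e⁻¹ 0 = L := by rw [← he]; exact Equiv.symm_apply_apply e L
          rcases hd : Equiv.Perm.decomposeFin e⁻¹ with ⟨a, g⟩
          have h2 : e⁻¹ 0 = a := by
            conv_lhs => rw [← Equiv.Perm.decomposeFin.symm_apply_apply e⁻¹, hd]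
            exact Equiv.Perm.decomposeFin_symm_apply_zero a g
          have ha : a = L := h2.symm.trans h1
          refine Subtype.ext ?_
          show (Equiv.Perm.decomposeFin.symm (L, (Equiv.Perm.decomposeFin e⁻¹).2))⁻¹ = e
          rw [hd]
          show (Equiv.Perm.decomposeFin.symm (L, g))⁻¹ = e
          rw [← ha, ← hd, Equiv.symm_apply_apply, inv_inv]
        · intro g
          show (Equiv.Perm.decomposeFin ((Equiv.Perm.decomposeFin.symm (L, g))⁻¹)⁻¹).2 = g
          rw [inv_inv, Equiv.apply_symm_apply]
      rw [← step1, Nat.card_congr e1, Nat.card_eq_fintype_card, Fintype.card_perm,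
        Fintype.card_fin]
    have goal := key ⟨n + 1 - 1, by omega⟩ (by simp)
    simpa using goal
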